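/- Let (𝔪, ε) be a nonempty signed symmetric multisegment in the good-parity setting, with initial sequence Δ₁ ⪰ … ⪰ Δ_l. Suppose there exists j ≥ 1 with j < l such that c(Δ_{j+1}) = 0 and c(Δ_j) = 1/2. Then the multiplicity of the segment p(Δ_{j+1}) in 𝔪# is even. -/
import Mathlib


namespace AZ

/-- A segment in doubled coordinates: the pair `(a, b)` represents the segment
`[a/2, b/2]` whose endpoints lie in `(1/2)ℤ`.  Thus the end `e(Δ)` is `Δ.2 / 2`,
the beginning `b(Δ)` is `Δ.1 / 2`, `Δ` is centered iff `Δ.1 + Δ.2 = 0`, and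
`c(Δ) = 1/2` iff `Δ.1 + Δ.2 = 2`. -/
abbrev Seg := ℤ × ℤ

namespace Seg

/-- Well-formedness of a segment: `a ≤ b` and `a ≡ b [ZMOD 2]`, i.e. `b - a ∈ 2ℕ`. -/
def WF (Δ : Seg) : Prop := Δ.1 ≤ Δ.2 ∧ Δ.1 % 2 = Δ.2 % 2

/-- The dual (contragredient) segment `Δ∨ = [−b, −a]`. -/
def dual (Δ : Seg) : Seg := (-Δ.2, -Δ.1)

/-- `Δ⁻` : the segment with its end removed. -/
def trimEnd (Δ : Seg) : Seg := (Δ.1, Δ.2 - 2)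

/-- `⁻Δ` : the segment with its beginning removed. -/
def trimBeg (Δ : Seg) : Seg := (Δ.1 + 2, Δ.2)

/-- `⁺Δ` : the segment with its beginning extended. -/
def extBeg (Δ : Seg) : Seg := (Δ.1 - 2, Δ.2)

/-- The order on segments: `[x₁,y₁] ≤ [x₂,y₂]` iff `x₁ < x₂`, or `x₁ = x₂` and `y₁ ≥ y₂`. -/
def le (Δ₁ Δ₂ : Seg) : Prop := Δ₁.1 < Δ₂.1 ∨ (Δ₁.1 = Δ₂.1 ∧ Δ₂.2 ≤ Δ₁.2)

end Seg

/-- Labels `≤0`, `=0`, `≥0` for labeled segments. -/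
inductive Label
  | le0 | eq0 | ge0
deriving DecidableEq

/-- Numerical index of a label, used to order the labels `≤0 < =0 < ≥0`. -/
def Label.idx : Label → ℕ
  | .le0 => 0
  | .eq0 => 1
  | .ge0 => 2

/-- A labeled segment: a segment together with a label. -/
abbrev LSeg := Seg × Label

namespace LSeg

/-- The order `⪯` on labeled segments: segments labeled `≤0` precede those labeled `=0`,
which precede those labeled `≥0`; for equal labels `≥0` or `≤0` one compares the segments,
and for label `=0` one compares the ends. -/
def le (Λ₁ Λ₂ : LSeg) : Prop :=
  Λ₁.2.idx < Λ₂.2.idx ∨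
    (Λ₁.2 = Λ₂.2 ∧
      if Λ₁.2 = Label.eq0 then Λ₁.1.2 ≤ Λ₂.1.2 else Seg.le Λ₁.1 Λ₂.1)

/-- The strict order `≺` on labeled segments. -/
def lt (Λ₁ Λ₂ : LSeg) : Prop := LSeg.le Λ₁ Λ₂ ∧ Λ₁ ≠ Λ₂

/-- The contragredient of a labeled segment: for a centered segment the label `≤0`
becomes `≥0` and the labels `=0`, `≥0` are kept; for a non-centered segment the
label is flipped. -/
def dual (Λ : LSeg) : LSeg :=
  (Seg.dual Λ.1,
    if Λ.1.1 + Λ.1.2 = 0 then (if Λ.2 = Label.le0 then Label.ge0 else Λ.2)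
    else
      match Λ.2 with
      | Label.le0 => Label.ge0
      | Label.eq0 => Label.eq0
      | Label.ge0 => Label.le0)

end LSeg

/-- The forced label of a non-centered segment. -/
def forcedLabel (Δ : Seg) : Label := if 0 < Δ.1 + Δ.2 then Label.ge0 else Label.le0

/-- The labeling `s(𝔪)` of a multisegment: each non-centered segment gets its forced
label; a centered segment of multiplicity `m` contributes `⌊m/2⌋` copies labeled `≤0`,
`⌊m/2⌋` copies labeled `≥0`, and `m − 2⌊m/2⌋` copies labeled `=0`. -/
def smap (m : Multiset Seg) : Multiset LSeg :=
  (m.filter fun Δ => ¬ Δ.1 + Δ.2 = 0).map (fun Δ => (Δ, forcedLabel Δ)) +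
    (m.toFinset.filter fun Δ => Δ.1 + Δ.2 = 0).val.bind (fun Δ =>
      Multiset.replicate (m.count Δ / 2) (Δ, Label.le0) +
        Multiset.replicate (m.count Δ / 2) (Δ, Label.ge0) +
        Multiset.replicate (m.count Δ % 2) (Δ, Label.eq0))

/-- A labeled segment is special (the initial sequence stops there): `[0,0]` labeled
`≥0` or `=0` in the integer case; `[1/2,1/2]`, or `[−1/2,1/2]` labeled `≥0` or `=0`
with `ε([−1/2,1/2]) = −1`, in the half-integer case. -/
def Special (ε : Seg → ℤ) (Λ : LSeg) : Prop :=
  (Λ.1 = ((0 : ℤ), (0 : ℤ)) ∧ (Λ.2 = Label.ge0 ∨ Λ.2 = Label.eq0)) ∨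
    Λ.1 = ((1 : ℤ), (1 : ℤ)) ∨
      (Λ.1 = ((-1 : ℤ), (1 : ℤ)) ∧ (Λ.2 = Label.ge0 ∨ Λ.2 = Label.eq0) ∧ ε (-1, 1) = -1)

instance (ε : Seg → ℤ) (Λ : LSeg) : Decidable (Special ε Λ) := by
  unfold Special; infer_instance

/-- The condition for `next` to be a successor of `cur` in the initial sequence:
`next ≺ cur`, `e(next) = e(cur) − 1`, and opposite signs when both are centered. -/
def Succ (ε : Seg → ℤ) (cur next : LSeg) : Prop :=
  LSeg.lt next cur ∧ next.1.2 = cur.1.2 - 2 ∧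
    (cur.1.1 + cur.1.2 = 0 → next.1.1 + next.1.2 = 0 → ε next.1 = - ε cur.1)

/-- `Δ 1, …, Δ l` is the initial sequence in the algorithm for `(m, ε)`:
`Δ 1` is the `⪯`-largest element of `s(m)` with maximal end; recursively,
`Δ (j+1)` is the `⪯`-largest successor of `Δ j`; the sequence stops when the
current segment is special or no successor exists. -/
structure IsInitSeq (m : Multiset Seg) (ε : Seg → ℤ) (Δ : ℕ → LSeg) (l : ℕ) : Prop where
  one_le : 1 ≤ l
  mem : ∀ j, 1 ≤ j → j ≤ l → Δ j ∈ smap m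
  first_max_end : ∀ Λ ∈ smap m, Λ.1.2 ≤ (Δ 1).1.2
  first_max : ∀ Λ ∈ smap m, Λ.1.2 = (Δ 1).1.2 → LSeg.le Λ (Δ 1)
  not_special : ∀ j, 1 ≤ j → j < l → ¬ Special ε (Δ j)
  succ : ∀ j, 1 ≤ j → j < l → Succ ε (Δ j) (Δ (j + 1))
  succ_max : ∀ j, 1 ≤ j → j < l → ∀ Λ ∈ smap m, Succ ε (Δ j) Λ → LSeg.le Λ (Δ (j + 1))
  last : Special ε (Δ l) ∨ ∀ Λ ∈ smap m, ¬ Succ ε (Δ l) Λ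

/-- The sign `ε₀`: `−1` if the sequence stopped at a special segment, `1` otherwise. -/
def eps0 (ε : Seg → ℤ) (Δ : ℕ → LSeg) (l : ℕ) : ℤ :=
  if Special ε (Δ l) then -1 else 1

/-- The number `n₀` of centered segments of `m`. -/
def nCentered (m : Multiset Seg) : ℕ := (m.filter fun Δ => Δ.1 + Δ.2 = 0).card

/-- The sign `ε₁` of the centered segment `𝔪₁` in the case `ε₀ = −1`:
`(−1)^(n₀+1)·ε([0,0])` in the integer case, `(−1)^(n₀)` in the half-integer case. -/
def epsOne (m : Multiset Seg) (ε : Seg → ℤ) (Δ : ℕ → LSeg) : ℤ :=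
  if (Δ 1).1.2 % 2 = 0 then (-1) ^ (nCentered m + 1) * ε (0, 0)
  else (-1) ^ nCentered m

/-- The signed multisegment `𝔪₁`: if `ε₀ = −1` it is the centered segment
`[−e(Δ₁), e(Δ₁)]` with sign `ε₁`; otherwise it is
`[e(Δ_l), e(Δ₁)] + [−e(Δ₁), −e(Δ_l)]` (non-centered segments carry sign `1`). -/
def mOne (m : Multiset Seg) (ε : Seg → ℤ) (Δ : ℕ → LSeg) (l : ℕ) : Multiset (Seg × ℤ) :=
  if Special ε (Δ l) then {((-(Δ 1).1.2, (Δ 1).1.2), epsOne m ε Δ)}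
  else {(((Δ l).1.2, (Δ 1).1.2), 1), ((-(Δ 1).1.2, -(Δ l).1.2), 1)}

/-- The labeled copies `Δ 1, …, Δ l` whose end gets removed. -/
def DEnd (Δ : ℕ → LSeg) (l : ℕ) : Multiset LSeg := (Finset.Icc 1 l).val.map Δ

/-- The labeled copies (the contragredients of the `Δ j`) whose beginning gets removed. -/
def DBeg (Δ : ℕ → LSeg) (l : ℕ) : Multiset LSeg := (DEnd Δ l).map LSeg.dual

/-- The labeled copies trimmed on both sides. -/
def DBoth (Δ : ℕ → LSeg) (l : ℕ) : Multiset LSeg := DEnd Δ l ∩ DBeg Δ l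

/-- The multisegment `𝔪#`: remove the ends of the `Δ j` and the beginnings of their
contragredients (one labeled copy each, both trims if the copy occurs in both lists),
keep all other copies, and discard empty segments. -/
def mHash (m : Multiset Seg) (Δ : ℕ → LSeg) (l : ℕ) : Multiset Seg :=
  (smap m - DEnd Δ l - (DBeg Δ l - DBoth Δ l)).map Prod.fst +
    ((DBoth Δ l).map (fun Λ => ((Λ.1.1 + 2, Λ.1.2 - 2) : Seg)) +
        (DEnd Δ l - DBoth Δ l).map (fun Λ => ((Λ.1.1, Λ.1.2 - 2) : Seg)) +
        (DBeg Δ l - DBoth Δ l).map (fun Λ => ((Λ.1.1 + 2, Λ.1.2) : Seg))).filter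
      fun Δ0 => Δ0.1 ≤ Δ0.2

/-- The trimmed segment `Λ_{i_j}#` obtained from `Δ j`. -/
def trimAt (Δ : ℕ → LSeg) (l : ℕ) (j : ℕ) : Seg :=
  if Δ j ∈ DBeg Δ l then ((Δ j).1.1 + 2, (Δ j).1.2 - 2)
  else ((Δ j).1.1, (Δ j).1.2 - 2)

/-- The sign function `ε#` on (centered) segments of `𝔪#`. -/
def epsHash (m : Multiset Seg) (ε : Seg → ℤ) (Δ : ℕ → LSeg) (l : ℕ) : Seg → ℤ :=
  fun Δ0 =>
    if ∃ j ∈ Finset.Icc 1 l, ((Δ j).1.1 + (Δ j).1.2 = 0 ∧ trimAt Δ l j = Δ0) then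
      eps0 ε Δ l * ε (Δ0.1 - 2, Δ0.2 + 2)
    else if ∃ j ∈ Finset.Icc 1 l,
        ((Δ j).1.1 + (Δ j).1.2 = 2 ∧ trimAt Δ l j = Δ0 ∧ Δ0 ∉ m) then
      eps0 ε Δ l
    else if ∃ j ∈ Finset.Icc 1 l,
        ((Δ j).1.1 + (Δ j).1.2 = 2 ∧ trimAt Δ l j = Δ0 ∧ Δ0 ∈ m) then
      -(eps0 ε Δ l) * ε Δ0
    else eps0 ε Δ l * ε Δ0

/-- The good-parity duality algorithm `AD`, as a relation between the input `(m, ε)`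
and the output signed multisegment: `AD(0) = 0` and
`AD(𝔪, ε) = (𝔪₁, ε₁) + AD(𝔪#, ε#)`. -/
inductive IsAD : Multiset Seg → (Seg → ℤ) → Multiset (Seg × ℤ) → Prop
  | zero (ε : Seg → ℤ) : IsAD 0 ε 0
  | step {m : Multiset Seg} {ε : Seg → ℤ} {Δ : ℕ → LSeg} {l : ℕ} {d : Multiset (Seg × ℤ)}
      (hm : m ≠ 0) (hseq : IsInitSeq m ε Δ l)
      (hrec : IsAD (mHash m Δ l) (epsHash m ε Δ l) d) :
      IsAD m ε (mOne m ε Δ l + d)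

/-- A valid signed symmetric multisegment in the good-parity setting. -/
structure GoodInput (m : Multiset Seg) (ε : Seg → ℤ) : Prop where
  wf : ∀ Δ0 ∈ m, Seg.WF Δ0
  symm : m.map Seg.dual = m
  parity : ∀ Δ₁ ∈ m, ∀ Δ₂ ∈ m, Δ₁.2 % 2 = Δ₂.2 % 2
  sign : ∀ Δ0, ε Δ0 = 1 ∨ ε Δ0 = -1

section Aux

lemma count_map_fst (X : Multiset LSeg) (s : Seg) :
    (X.map Prod.fst).count s =
      X.count (s, .le0) + X.count (s, .eq0) + X.count (s, .ge0) := by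
  induction X using Multiset.induction with
  | empty => simp
  | cons a X ih =>
    obtain ⟨a1, la⟩ := a
    simp only [Multiset.map_cons, Multiset.count_cons, ih]
    cases la <;> by_cases h : a1 = s <;> simp [h, Prod.ext_iff] <;> omega

lemma count_map_Icc (f : ℕ → LSeg) (l : ℕ) (Λ : LSeg) (k₀ : ℕ)
    (hk : k₀ ∈ Finset.Icc 1 l)
    (h : ∀ k ∈ Finset.Icc 1 l, f k = Λ → k = k₀) :
    ((Finset.Icc 1 l).val.map f).count Λ = if f k₀ = Λ then 1 else 0 := by
  classical
  rw [Multiset.count_map]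
  have hfil : Multiset.filter (fun a => Λ = f a) (Finset.Icc 1 l).val
      = (Finset.filter (fun a => Λ = f a) (Finset.Icc 1 l)).val := rfl
  rw [hfil]
  have hset : Finset.filter (fun a => Λ = f a) (Finset.Icc 1 l)
      = if f k₀ = Λ then {k₀} else ∅ := by
    ext x
    split_ifs with hf
    · simp only [Finset.mem_filter, Finset.mem_singleton]
      constructor
      · rintro ⟨hx, hfx⟩; exact h x hx hfx.symm
      · rintro rfl; exact ⟨hk, hf.symm⟩
    · simp only [Finset.mem_filter, Finset.notMem_empty, iff_false, not_and]
      intro hx hfx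
      exact hf ((h x hx hfx.symm) ▸ hfx.symm)
  rw [hset]
  split_ifs <;> simp

lemma count_map_Icc_zero (f : ℕ → LSeg) (l : ℕ) (Λ : LSeg)
    (h : ∀ k ∈ Finset.Icc 1 l, f k ≠ Λ) :
    ((Finset.Icc 1 l).val.map f).count Λ = 0 := by
  rw [Multiset.count_eq_zero]
  intro hmem
  obtain ⟨k, hk, hfk⟩ := Multiset.mem_map.mp hmem
  exact h k hk hfk

lemma smap_mem_parts {m : Multiset Seg} {Λ : LSeg} (h : Λ ∈ smap m) :
    Λ.1 ∈ m ∧ (¬ Λ.1.1 + Λ.1.2 = 0 → Λ.2 = forcedLabel Λ.1) := by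
  unfold smap at h
  rcases Multiset.mem_add.mp h with h | h
  · obtain ⟨Δ0, hΔ0, rfl⟩ := Multiset.mem_map.mp h
    exact ⟨(Multiset.mem_filter.mp hΔ0).1, fun _ => rfl⟩
  · obtain ⟨Δ0, hΔ0, hΛ⟩ := Multiset.mem_bind.mp h
    have hΔm : Δ0 ∈ m ∧ Δ0.1 + Δ0.2 = 0 := by
      have := Finset.mem_filter.mp hΔ0
      exact ⟨Multiset.mem_toFinset.mp this.1, this.2⟩
    have hfst : Λ.1 = Δ0 := by
      rcases Multiset.mem_add.mp hΛ with h' | h'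
      · rcases Multiset.mem_add.mp h' with h'' | h''
        · rw [Multiset.eq_of_mem_replicate h'']
        · rw [Multiset.eq_of_mem_replicate h'']
      · rw [Multiset.eq_of_mem_replicate h']
    constructor
    · rw [hfst]; exact hΔm.1
    · intro hnc; exact absurd (hfst ▸ hΔm.2) hnc

lemma count_smap_centered (m : Multiset Seg) (s : Seg) (hs : s.1 + s.2 = 0) (hm : s ∈ m)
    (lab : Label) :
    (smap m).count (s, lab) =
      match lab with
      | .le0 => m.count s / 2
      | .eq0 => m.count s % 2
      | .ge0 => m.count s / 2 := by
  classical
  unfold smap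
  rw [Multiset.count_add]
  have h1 : ((m.filter fun Δ => ¬ Δ.1 + Δ.2 = 0).map (fun Δ => (Δ, forcedLabel Δ))).count (s, lab)
      = 0 := by
    rw [Multiset.count_eq_zero]
    intro hmem
    obtain ⟨Δ0, hΔ0, heq⟩ := Multiset.mem_map.mp hmem
    have h2 := (Multiset.mem_filter.mp hΔ0).2
    have : Δ0 = s := (Prod.ext_iff.mp heq).1
    exact h2 (this ▸ hs)
  rw [h1, Multiset.count_bind]
  have hF : s ∈ m.toFinset.filter (fun Δ => Δ.1 + Δ.2 = 0) :=
    Finset.mem_filter.mpr ⟨Multiset.mem_toFinset.mpr hm, hs⟩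
  have hsum : ((m.toFinset.filter fun Δ => Δ.1 + Δ.2 = 0).val.map (fun Δ =>
      (Multiset.replicate (m.count Δ / 2) (Δ, Label.le0) +
        Multiset.replicate (m.count Δ / 2) (Δ, Label.ge0) +
        Multiset.replicate (m.count Δ % 2) (Δ, Label.eq0)).count (s, lab))).sum
      = ∑ Δ0 ∈ (m.toFinset.filter fun Δ => Δ.1 + Δ.2 = 0),
        (Multiset.replicate (m.count Δ0 / 2) (Δ0, Label.le0) +
          Multiset.replicate (m.count Δ0 / 2) (Δ0, Label.ge0) +
          Multiset.replicate (m.count Δ0 % 2) (Δ0, Label.eq0)).count (s, lab) := rfl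
  rw [hsum, Finset.sum_eq_single_of_mem s hF]
  · cases lab <;>
      simp [Multiset.count_replicate, Prod.ext_iff]
  · intro b _ hb
    cases lab <;> simp only [Multiset.count_add, Multiset.count_replicate, Prod.ext_iff] <;>
      simp <;> (intro h1 h2; exact absurd (Prod.ext_iff.mpr ⟨h1, h2⟩) hb)

lemma ends_formula {m : Multiset Seg} {ε : Seg → ℤ} {Δ : ℕ → LSeg} {l : ℕ}
    (hseq : IsInitSeq m ε Δ l) :
    ∀ k, 1 ≤ k → k ≤ l → (Δ k).1.2 + 2 * (k : ℤ) = (Δ 1).1.2 + 2 := by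
  intro k
  induction k with
  | zero => omega
  | succ n ih =>
    intro h1 h2
    rcases Nat.lt_or_ge 1 (n + 1) with h | h
    · have hn1 : 1 ≤ n := by omega
      have hnl : n < l := by omega
      have he := (hseq.succ n hn1 hnl).2.1
      have hi := ih hn1 (by omega)
      push_cast
      push_cast at hi
      omega
    · have : n = 0 := by omega
      subst this
      push_cast; ring

lemma end_inj {m : Multiset Seg} {ε : Seg → ℤ} {Δ : ℕ → LSeg} {l : ℕ}
    (hseq : IsInitSeq m ε Δ l) {k₁ k₂ : ℕ}
    (h₁ : k₁ ∈ Finset.Icc 1 l) (h₂ : k₂ ∈ Finset.Icc 1 l)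
    (h : (Δ k₁).1.2 = (Δ k₂).1.2) : k₁ = k₂ := by
  simp only [Finset.mem_Icc] at h₁ h₂
  have e₁ := ends_formula hseq k₁ h₁.1 h₁.2
  have e₂ := ends_formula hseq k₂ h₂.1 h₂.2
  omega

end Aux

/-- Lemma 6.0.1: if there is `j` with `1 ≤ j < l`, `c(Δ_{j+1}) = 0`
and `c(Δ_j) = 1/2`, then the multiplicity of `p(Δ_{j+1})` in `𝔪#` is even. -/
theorem stmt0 (m : Multiset Seg) (ε : Seg → ℤ) (hgood : GoodInput m ε) (hne : m ≠ 0)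
    (Δ : ℕ → LSeg) (l : ℕ) (hseq : IsInitSeq m ε Δ l)
    (j : ℕ) (hj1 : 1 ≤ j) (hjl : j < l)
    (hc1 : (Δ (j + 1)).1.1 + (Δ (j + 1)).1.2 = 0)
    (hc2 : (Δ j).1.1 + (Δ j).1.2 = 2) :
    Even ((mHash m Δ l).count (Δ (j + 1)).1) := by
  classical
  have hj1mem : j + 1 ∈ Finset.Icc 1 l := Finset.mem_Icc.mpr ⟨by omega, by omega⟩
  have hjmem : j ∈ Finset.Icc 1 l := Finset.mem_Icc.mpr ⟨hj1, le_of_lt hjl⟩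
  have hsucc := hseq.succ j hj1 hjl
  have hA2 : (Δ j).1.2 = (Δ (j+1)).1.2 + 2 := by have := hsucc.2.1; omega
  have hA1 : (Δ (j+1)).1.1 = -(Δ (j+1)).1.2 := by omega
  have hA3 : (Δ j).1.1 = -(Δ (j+1)).1.2 := by omega
  have hmem1 : Δ (j+1) ∈ smap m := hseq.mem (j+1) (by omega) (by omega)
  have hmemj : Δ j ∈ smap m := hseq.mem j hj1 (le_of_lt hjl)
  have hsm : (Δ (j+1)).1 ∈ m := (smap_mem_parts hmem1).1
  have hb0 : (0:ℤ) ≤ (Δ (j+1)).1.2 := by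
    have := (hgood.wf _ hsm).1; omega
  have hlabj : (Δ j).2 = Label.ge0 := by
    have h := (smap_mem_parts hmemj).2 (by omega)
    rw [h]; unfold forcedLabel; rw [if_pos (by omega)]
  have hDBegeq : DBeg Δ l = (Finset.Icc 1 l).val.map (fun k => LSeg.dual (Δ k)) := by
    unfold DBeg DEnd
    rw [Multiset.map_map]
    rfl
  -- counts in DEnd
  have hcE : ∀ lab, (DEnd Δ l).count ((Δ (j+1)).1, lab)
      = if lab = (Δ (j+1)).2 then 1 else 0 := by
    intro lab
    unfold DEnd
    rw [count_map_Icc Δ l _ (j+1) hj1mem (fun k hkm hk =>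
      end_inj hseq hkm hj1mem (by rw [hk]))]
    by_cases h : lab = (Δ (j+1)).2
    · rw [if_pos h, if_pos (show Δ (j+1) = ((Δ (j+1)).1, lab) by rw [h])]
    · rw [if_neg h, if_neg (fun hcon => h (congrArg Prod.snd hcon).symm)]
  have hcEj : (DEnd Δ l).count (Δ j) = 1 := by
    unfold DEnd
    rw [count_map_Icc Δ l _ j hjmem (fun k hkm hk =>
      end_inj hseq hkm hjmem (by rw [hk])), if_pos rfl]
  have hcEdj : (DEnd Δ l).count (LSeg.dual (Δ j)) = 0 := by
    unfold DEnd
    apply count_map_Icc_zero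
    intro k hkm hk
    have h2 : (Δ k).1.2 = (Δ (j+1)).1.2 := by
      have h3 : (Δ k).1.2 = -(Δ j).1.1 := congrArg (fun Λ : LSeg => Λ.1.2) hk
      omega
    have hkj := end_inj hseq hkm hj1mem h2
    subst hkj
    have h4 : (Δ (j+1)).1.1 = -(Δ j).1.2 := congrArg (fun Λ : LSeg => Λ.1.1) hk
    omega
  -- the dual of Δ (j+1)
  have hduals : LSeg.dual (Δ (j+1))
      = ((Δ (j+1)).1, if (Δ (j+1)).2 = Label.le0 then Label.ge0 else (Δ (j+1)).2) := by
    unfold LSeg.dual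
    rw [if_pos hc1]
    refine Prod.ext_iff.mpr ⟨?_, rfl⟩
    show (Seg.dual (Δ (j+1)).1) = (Δ (j+1)).1
    unfold Seg.dual
    refine Prod.ext_iff.mpr ⟨?_, ?_⟩ <;> simp <;> omega
  -- counts in DBeg
  have hcB : ∀ lab, (DBeg Δ l).count ((Δ (j+1)).1, lab)
      = if (if (Δ (j+1)).2 = Label.le0 then Label.ge0 else (Δ (j+1)).2) = lab then 1 else 0 := by
    intro lab
    rw [hDBegeq]
    rw [count_map_Icc _ l _ (j+1) hj1mem (fun k hkm hk => by
      refine end_inj hseq hkm hj1mem ?_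
      have h' : -(Δ k).1.2 = (Δ (j+1)).1.1 := congrArg (fun Λ : LSeg => Λ.1.1) hk
      omega)]
    rw [hduals]
    by_cases h : (if (Δ (j+1)).2 = Label.le0 then Label.ge0 else (Δ (j+1)).2) = lab
    · rw [if_pos h, if_pos (show (((Δ (j+1)).1,
          (if (Δ (j+1)).2 = Label.le0 then Label.ge0 else (Δ (j+1)).2)) : LSeg)
          = ((Δ (j+1)).1, lab) by rw [h])]
    · rw [if_neg h, if_neg (fun hcon => h (congrArg Prod.snd hcon))]
  have hcBj : (DBeg Δ l).count (Δ j) = 0 := by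
    rw [hDBegeq]
    apply count_map_Icc_zero
    intro k hkm hk
    have h1 : -(Δ k).1.2 = (Δ j).1.1 := congrArg (fun Λ : LSeg => Λ.1.1) hk
    have hke : (Δ k).1.2 = (Δ (j+1)).1.2 := by omega
    have hkj := end_inj hseq hkm hj1mem hke
    subst hkj
    have h2 : -(Δ (j+1)).1.1 = (Δ j).1.2 := congrArg (fun Λ : LSeg => Λ.1.2) hk
    omega
  have hcBdj : (DBeg Δ l).count (LSeg.dual (Δ j)) = 1 := by
    rw [hDBegeq]
    rw [count_map_Icc _ l _ j hjmem (fun k hkm hk => end_inj hseq hkm hjmem (by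
      have h1 : -(Δ k).1.2 = -(Δ j).1.2 := congrArg (fun Λ : LSeg => Λ.1.1) hk
      omega)), if_pos rfl]
  -- the three trimmed contributions
  have hT1 : ((DBoth Δ l).map (fun Λ => ((Λ.1.1 + 2, Λ.1.2 - 2) : Seg))).count (Δ (j+1)).1
      = 0 := by
    rw [Multiset.count_eq_zero]
    intro hmem
    obtain ⟨Λ, hΛ, hval⟩ := Multiset.mem_map.mp hmem
    have hΛE : Λ ∈ DEnd Δ l := (Multiset.mem_inter.mp hΛ).1
    unfold DEnd at hΛE
    obtain ⟨k, hkm, hkΛ⟩ := Multiset.mem_map.mp hΛE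
    subst hkΛ
    have h1 : (Δ k).1.1 + 2 = (Δ (j+1)).1.1 := (Prod.ext_iff.mp hval).1
    have h2 : (Δ k).1.2 - 2 = (Δ (j+1)).1.2 := (Prod.ext_iff.mp hval).2
    have hkj := end_inj hseq (Finset.mem_val.mp hkm) hjmem
      (by omega : (Δ k).1.2 = (Δ j).1.2)
    subst hkj
    omega
  have hXE : ∀ Λ ∈ DEnd Δ l - DBoth Δ l, ∃ k ∈ Finset.Icc 1 l, Δ k = Λ := by
    intro Λ hΛ
    have h : Λ ∈ DEnd Δ l := Multiset.mem_of_le (Multiset.sub_le_self _ _) hΛ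
    unfold DEnd at h
    obtain ⟨k, hk, hkΛ⟩ := Multiset.mem_map.mp h
    exact ⟨k, Finset.mem_val.mp hk, hkΛ⟩
  have hXB : ∀ Λ ∈ DBeg Δ l - DBoth Δ l, ∃ k ∈ Finset.Icc 1 l, LSeg.dual (Δ k) = Λ := by
    intro Λ hΛ
    have h : Λ ∈ DBeg Δ l := Multiset.mem_of_le (Multiset.sub_le_self _ _) hΛ
    rw [hDBegeq] at h
    obtain ⟨k, hk, hkΛ⟩ := Multiset.mem_map.mp h
    exact ⟨k, Finset.mem_val.mp hk, hkΛ⟩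
  have hT2 : ((DEnd Δ l - DBoth Δ l).map (fun Λ => ((Λ.1.1, Λ.1.2 - 2) : Seg))).count (Δ (j+1)).1
      = (DEnd Δ l - DBoth Δ l).count (Δ j) := by
    rw [Multiset.count_map, Multiset.count_eq_card_filter_eq]
    congr 1
    apply Multiset.filter_congr
    intro Λ hΛ
    obtain ⟨k, hkm, hkΛ⟩ := hXE Λ hΛ
    constructor
    · intro h
      have h1 : (Δ (j+1)).1.1 = Λ.1.1 := (Prod.ext_iff.mp h).1
      have h2 : (Δ (j+1)).1.2 = Λ.1.2 - 2 := (Prod.ext_iff.mp h).2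
      subst hkΛ
      have hkj := end_inj hseq hkm hjmem (by omega : (Δ k).1.2 = (Δ j).1.2)
      rw [hkj]
    · intro h
      rw [← h]
      refine Prod.ext_iff.mpr ⟨?_, ?_⟩ <;> simp <;> omega
  have hT3 : ((DBeg Δ l - DBoth Δ l).map (fun Λ => ((Λ.1.1 + 2, Λ.1.2) : Seg))).count (Δ (j+1)).1
      = (DBeg Δ l - DBoth Δ l).count (LSeg.dual (Δ j)) := by
    rw [Multiset.count_map, Multiset.count_eq_card_filter_eq]
    congr 1
    apply Multiset.filter_congr
    intro Λ hΛ
    obtain ⟨k, hkm, hkΛ⟩ := hXB Λ hΛ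
    constructor
    · intro h
      have h1 : (Δ (j+1)).1.1 = Λ.1.1 + 2 := (Prod.ext_iff.mp h).1
      have h2 : (Δ (j+1)).1.2 = Λ.1.2 := (Prod.ext_iff.mp h).2
      subst hkΛ
      have e1 : (LSeg.dual (Δ k)).1.1 = -(Δ k).1.2 := rfl
      have hkj : k = j := end_inj hseq hkm hjmem (by omega)
      rw [hkj]
    · intro h
      rw [← h]
      refine Prod.ext_iff.mpr ⟨?_, ?_⟩
      · show (Δ (j+1)).1.1 = (LSeg.dual (Δ j)).1.1 + 2
        have e1 : (LSeg.dual (Δ j)).1.1 = -(Δ j).1.2 := rfl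
        omega
      · show (Δ (j+1)).1.2 = (LSeg.dual (Δ j)).1.2
        have e2 : (LSeg.dual (Δ j)).1.2 = -(Δ j).1.1 := rfl
        omega
  -- smap counts
  have hS1 : (smap m).count ((Δ (j+1)).1, Label.le0) = m.count (Δ (j+1)).1 / 2 :=
    count_smap_centered m _ hc1 hsm Label.le0
  have hS2 : (smap m).count ((Δ (j+1)).1, Label.eq0) = m.count (Δ (j+1)).1 % 2 :=
    count_smap_centered m _ hc1 hsm Label.eq0
  have hS3 : (smap m).count ((Δ (j+1)).1, Label.ge0) = m.count (Δ (j+1)).1 / 2 :=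
    count_smap_centered m _ hc1 hsm Label.ge0
  -- the label of Δ (j+1) is not ge0
  have hLge : (Δ (j+1)).2 ≠ Label.ge0 := by
    intro hL
    have hle := hsucc.1.1
    unfold LSeg.le at hle
    rw [hL, hlabj] at hle
    rcases hle with h | ⟨-, h⟩
    · simp [Label.idx] at h
    · rw [if_neg (by decide)] at h
      unfold Seg.le at h
      rcases h with h | ⟨-, h⟩ <;> omega
  -- main computation
  rw [Nat.even_iff]
  unfold mHash
  rw [Multiset.count_add]
  simp only [Multiset.count_filter]
  rw [if_pos (show (Δ (j+1)).1.1 ≤ (Δ (j+1)).1.2 by omega)]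
  rw [Multiset.count_add, Multiset.count_add, hT1, hT2, hT3, count_map_fst]
  simp only [DBoth, Multiset.count_sub, Multiset.count_inter]
  cases hL : (Δ (j+1)).2 with
  | ge0 => exact absurd hL hLge
  | eq0 =>
    have hmm : ((Δ (j+1)).1, Label.eq0) ∈ smap m := by
      have h := hmem1
      rw [show Δ (j+1) = ((Δ (j+1)).1, (Δ (j+1)).2) from rfl, hL] at h
      exact h
    have hM1 : m.count (Δ (j+1)).1 % 2 = 1 := by
      have h := Multiset.one_le_count_iff_mem.mpr hmm
      rw [hS2] at h; omega
    have eEl : (DEnd Δ l).count ((Δ (j+1)).1, Label.le0) = 0 := by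
      rw [hcE Label.le0, hL]; decide
    have eEe : (DEnd Δ l).count ((Δ (j+1)).1, Label.eq0) = 1 := by
      rw [hcE Label.eq0, hL]; decide
    have eEg : (DEnd Δ l).count ((Δ (j+1)).1, Label.ge0) = 0 := by
      rw [hcE Label.ge0, hL]; decide
    have eBl : (DBeg Δ l).count ((Δ (j+1)).1, Label.le0) = 0 := by
      rw [hcB Label.le0, hL]; decide
    have eBe : (DBeg Δ l).count ((Δ (j+1)).1, Label.eq0) = 1 := by
      rw [hcB Label.eq0, hL]; decide
    have eBg : (DBeg Δ l).count ((Δ (j+1)).1, Label.ge0) = 0 := by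
      rw [hcB Label.ge0, hL]; decide
    rw [hS1, hS2, hS3, eEl, eEe, eEg, eBl, eBe, eBg, hcEj, hcEdj, hcBj, hcBdj]
    omega
  | le0 =>
    have hM0 : m.count (Δ (j+1)).1 % 2 = 0 := by
      by_contra hx
      have hx1 : 1 ≤ (smap m).count ((Δ (j+1)).1, Label.eq0) := by rw [hS2]; omega
      have hmm : ((Δ (j+1)).1, Label.eq0) ∈ smap m := Multiset.one_le_count_iff_mem.mp hx1
      have hS : Succ ε (Δ j) ((Δ (j+1)).1, Label.eq0) := by
        refine ⟨⟨Or.inl ?_, ?_⟩, ?_, ?_⟩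
        · rw [hlabj]
          exact (by decide : Label.eq0.idx < Label.ge0.idx)
        · intro hcon
          have h := congrArg (fun Λ : LSeg => Λ.1.2) hcon
          simp only at h
          omega
        · show (Δ (j+1)).1.2 = (Δ j).1.2 - 2
          omega
        · intro h0 _
          exact absurd h0 (by omega)
      have hmax := hseq.succ_max j hj1 hjl _ hmm hS
      unfold LSeg.le at hmax
      rw [hL] at hmax
      rcases hmax with h | ⟨h, -⟩
      · simp [Label.idx] at h
      · simp at h
    have eEl : (DEnd Δ l).count ((Δ (j+1)).1, Label.le0) = 1 := by
      rw [hcE Label.le0, hL]; decide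
    have eEe : (DEnd Δ l).count ((Δ (j+1)).1, Label.eq0) = 0 := by
      rw [hcE Label.eq0, hL]; decide
    have eEg : (DEnd Δ l).count ((Δ (j+1)).1, Label.ge0) = 0 := by
      rw [hcE Label.ge0, hL]; decide
    have eBl : (DBeg Δ l).count ((Δ (j+1)).1, Label.le0) = 0 := by
      rw [hcB Label.le0, hL]; decide
    have eBe : (DBeg Δ l).count ((Δ (j+1)).1, Label.eq0) = 0 := by
      rw [hcB Label.eq0, hL]; decide
    have eBg : (DBeg Δ l).count ((Δ (j+1)).1, Label.ge0) = 1 := by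
      rw [hcB Label.ge0, hL]; decide
    rw [hS1, hS2, hS3, eEl, eEe, eEg, eBl, eBe, eBg, hcEj, hcEdj, hcBj, hcBdj]
    omega

end AZ
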